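/- arXiv:1904.05563 — 2 statements merged into one kernel-verified Lean document; each statement's English description precedes it below -/
import Mathlib

section
/- Let X₀ : ℝ^d → ℝ be a centered Gaussian field with stationary covariance r (so E[X₀(s)X₀(t)] = r(t - s), r(0) = 1). Define Y(s,t) := (X₀(s) + X₀(t)) / √(2 + 2r(t - s)) for pairs (s,t) with r(t-s) > -1. Then there exists an absolute constant C such that for all valid (s,t), (s',t'): E[(Y(s,t) - Y(s',t'))²] ≤ C (E[(X₀(s) - X₀(s'))²] + E[(X₀(t) - X₀(t'))²]). -/
set_option maxHeartbeats 1000000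


open MeasureTheory

private lemma intMul7 {Ω : Type*} [MeasurableSpace Ω] {μ : Measure Ω} {f g : Ω → ℝ}
    (hf : MemLp f 2 μ) (hg : MemLp g 2 μ) :
    Integrable (fun ω => f ω * g ω) μ := by
  have h1 := (hf.add hg).integrable_sq
  have h2 := hf.integrable_sq
  have h3 := hg.integrable_sq
  have he : (fun ω => f ω * g ω) = fun ω => (((f + g) ω) ^ 2 - f ω ^ 2 - g ω ^ 2) / 2 := by
    funext ω; simp only [Pi.add_apply]; ring
  rw [he]
  exact ((h1.sub h2).sub h3).div_const 2

private lemma cs7 {Ω : Type*} [MeasurableSpace Ω] {μ : Measure Ω} {f g : Ω → ℝ}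
    (hf : MemLp f 2 μ) (hg : MemLp g 2 μ) :
    |∫ ω, f ω * g ω ∂μ| ≤
      Real.sqrt (∫ ω, f ω ^ 2 ∂μ) * Real.sqrt (∫ ω, g ω ^ 2 ∂μ) := by
  set A := ∫ ω, f ω ^ 2 ∂μ with hAdef
  set B := ∫ ω, f ω * g ω ∂μ with hBdef
  set C := ∫ ω, g ω ^ 2 ∂μ with hCdef
  have hA : 0 ≤ A := integral_nonneg fun ω => sq_nonneg _
  have hC : 0 ≤ C := integral_nonneg fun ω => sq_nonneg _
  have key : ∀ x : ℝ, 0 ≤ A * (x * x) + (2 * B) * x + C := by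
    intro x
    have h1 : Integrable (fun ω => x ^ 2 * f ω ^ 2) μ := hf.integrable_sq.const_mul _
    have h2 : Integrable (fun ω => (2 * x) * (f ω * g ω)) μ := (intMul7 hf hg).const_mul _
    have h3 := hg.integrable_sq
    have he : A * (x * x) + (2 * B) * x + C = ∫ ω, (x * f ω + g ω) ^ 2 ∂μ := by
      have e0 : ∫ ω, (x * f ω + g ω) ^ 2 ∂μ
          = ∫ ω, (x ^ 2 * f ω ^ 2 + ((2 * x) * (f ω * g ω) + g ω ^ 2)) ∂μ := by
        congr 1; funext ω; ring
      have e1 : ∫ ω, (x ^ 2 * f ω ^ 2 + ((2 * x) * (f ω * g ω) + g ω ^ 2)) ∂μ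
          = (∫ ω, x ^ 2 * f ω ^ 2 ∂μ) + ∫ ω, ((2 * x) * (f ω * g ω) + g ω ^ 2) ∂μ :=
        integral_add h1 (h2.add h3)
      have e2 : ∫ ω, ((2 * x) * (f ω * g ω) + g ω ^ 2) ∂μ
          = (∫ ω, (2 * x) * (f ω * g ω) ∂μ) + ∫ ω, g ω ^ 2 ∂μ := integral_add h2 h3
      rw [e0, e1, e2, integral_const_mul, integral_const_mul, ← hAdef, ← hBdef, ← hCdef]
      ring
    rw [he]
    exact integral_nonneg fun ω => sq_nonneg _
  have hd := discrim_le_zero key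
  rw [discrim] at hd
  have hB2 : B ^ 2 ≤ A * C := by nlinarith
  calc |B| = Real.sqrt (B ^ 2) := (Real.sqrt_sq_eq_abs B).symm
    _ ≤ Real.sqrt (A * C) := Real.sqrt_le_sqrt hB2
    _ = Real.sqrt A * Real.sqrt C := Real.sqrt_mul hA C

private lemma intAddSq7 {Ω : Type*} [MeasurableSpace Ω] {μ : Measure Ω} {f g : Ω → ℝ}
    (hf : MemLp f 2 μ) (hg : MemLp g 2 μ) :
    ∫ ω, (f ω + g ω) ^ 2 ∂μ
      = (∫ ω, f ω ^ 2 ∂μ) + 2 * (∫ ω, f ω * g ω ∂μ) + ∫ ω, g ω ^ 2 ∂μ := by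
  have e0 : ∫ ω, (f ω + g ω) ^ 2 ∂μ
      = ∫ ω, (f ω ^ 2 + (2 * (f ω * g ω) + g ω ^ 2)) ∂μ := by
    congr 1; funext ω; ring
  have e1 : ∫ ω, (f ω ^ 2 + (2 * (f ω * g ω) + g ω ^ 2)) ∂μ
      = (∫ ω, f ω ^ 2 ∂μ) + ∫ ω, (2 * (f ω * g ω) + g ω ^ 2) ∂μ :=
    integral_add hf.integrable_sq (((intMul7 hf hg).const_mul 2).add hg.integrable_sq)
  have e2 : ∫ ω, (2 * (f ω * g ω) + g ω ^ 2) ∂μ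
      = (∫ ω, 2 * (f ω * g ω) ∂μ) + ∫ ω, g ω ^ 2 ∂μ :=
    integral_add ((intMul7 hf hg).const_mul 2) hg.integrable_sq
  rw [e0, e1, e2, integral_const_mul]
  ring

private lemma key7 {Ω : Type*} [MeasurableSpace Ω] {μ : Measure Ω}
    {f g f' g' : Ω → ℝ} {A B δ : ℝ}
    (hf : MemLp f 2 μ) (hg : MemLp g 2 μ) (hf' : MemLp f' 2 μ) (hg' : MemLp g' 2 μ)
    (hδ : 0 < δ)
    (hg1 : ∫ ω, g ω ^ 2 ∂μ = 1) (hf'1 : ∫ ω, f' ω ^ 2 ∂μ = 1) (hg'1 : ∫ ω, g' ω ^ 2 ∂μ = 1)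
    (hfg : ∫ ω, f ω * g ω ∂μ = A) (hfg' : ∫ ω, f' ω * g' ω ∂μ = B)
    (hA : -1 + δ ≤ A) (hB : -1 + δ ≤ B) :
    ∫ ω, ((f ω + g ω) / Real.sqrt (2 + 2 * A) - (f' ω + g' ω) / Real.sqrt (2 + 2 * B)) ^ 2 ∂μ ≤
      (2 / δ + 1 / δ ^ 2) * ((∫ ω, (f ω - f' ω) ^ 2 ∂μ) + ∫ ω, (g ω - g' ω) ^ 2 ∂μ) := by
  set a := Real.sqrt (2 + 2 * A) with hadef
  set b := Real.sqrt (2 + 2 * B) with hbdef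
  set U := ∫ ω, (f ω - f' ω) ^ 2 ∂μ with hUdef
  set V := ∫ ω, (g ω - g' ω) ^ 2 ∂μ with hVdef
  have hU0 : 0 ≤ U := integral_nonneg fun ω => sq_nonneg _
  have hV0 : 0 ≤ V := integral_nonneg fun ω => sq_nonneg _
  have hA0 : (0:ℝ) < 2 + 2 * A := by linarith
  have hB0 : (0:ℝ) < 2 + 2 * B := by linarith
  have ha2 : a ^ 2 = 2 + 2 * A := Real.sq_sqrt hA0.le
  have hb2 : b ^ 2 = 2 + 2 * B := Real.sq_sqrt hB0.le
  have hapos : 0 < a := Real.sqrt_pos.mpr hA0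
  have hbpos : 0 < b := Real.sqrt_pos.mpr hB0
  have haδ : 2 * δ ≤ a ^ 2 := by rw [ha2]; linarith
  have hbδ : 2 * δ ≤ b ^ 2 := by rw [hb2]; linarith
  -- Memℒp facts
  have m1 : MemLp (fun ω => (f ω - f' ω) + (g ω - g' ω)) 2 μ := (hf.sub hf').add (hg.sub hg')
  have m2 : MemLp (fun ω => f' ω + g' ω) 2 μ := hf'.add hg'
  have mLHS : MemLp (fun ω => (f ω + g ω) / a - (f' ω + g' ω) / b) 2 μ := by
    have he : (fun ω => (f ω + g ω) / a - (f' ω + g' ω) / b)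
        = fun ω => (1 / a) * ((fun ω => f ω + g ω) ω) - (1 / b) * ((fun ω => f' ω + g' ω) ω) := by
      funext ω; simp only; ring
    rw [he]
    exact ((hf.add hg).const_mul _).sub (m2.const_mul _)
  -- variance of f' + g'
  have hb2int : ∫ ω, (f' ω + g' ω) ^ 2 ∂μ = 2 + 2 * B := by
    rw [intAddSq7 hf' hg', hf'1, hg'1, hfg']; ring
  -- step 1: pointwise bound, integrated
  have key1 : ∫ ω, ((f ω + g ω) / a - (f' ω + g' ω) / b) ^ 2 ∂μ ≤
      ∫ ω, ((2 / a ^ 2) * ((f ω - f' ω) + (g ω - g' ω)) ^ 2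
            + (2 * (1 / a - 1 / b) ^ 2) * (f' ω + g' ω) ^ 2) ∂μ := by
    refine integral_mono mLHS.integrable_sq
      ((m1.integrable_sq.const_mul _).add (m2.integrable_sq.const_mul _)) ?_
    intro ω
    have hid : (f ω + g ω) / a - (f' ω + g' ω) / b
        = ((f ω - f' ω) + (g ω - g' ω)) / a + (1 / a - 1 / b) * (f' ω + g' ω) := by
      field_simp
      ring
    have h2 : (2 / a ^ 2) * ((f ω - f' ω) + (g ω - g' ω)) ^ 2
        = 2 * (((f ω - f' ω) + (g ω - g' ω)) / a) ^ 2 := by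
      field_simp
    simp only [hid, h2]
    nlinarith [sq_nonneg ((((f ω - f' ω) + (g ω - g' ω)) / a) - (1 / a - 1 / b) * (f' ω + g' ω))]
  -- step 2: split the integral
  have hsplit : ∫ ω, ((2 / a ^ 2) * ((f ω - f' ω) + (g ω - g' ω)) ^ 2
            + (2 * (1 / a - 1 / b) ^ 2) * (f' ω + g' ω) ^ 2) ∂μ
      = (2 / a ^ 2) * (∫ ω, ((f ω - f' ω) + (g ω - g' ω)) ^ 2 ∂μ)
        + (2 * (1 / a - 1 / b) ^ 2) * (2 + 2 * B) := by
    have e1 : ∫ ω, ((2 / a ^ 2) * ((f ω - f' ω) + (g ω - g' ω)) ^ 2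
            + (2 * (1 / a - 1 / b) ^ 2) * (f' ω + g' ω) ^ 2) ∂μ
        = (∫ ω, (2 / a ^ 2) * ((f ω - f' ω) + (g ω - g' ω)) ^ 2 ∂μ)
          + ∫ ω, (2 * (1 / a - 1 / b) ^ 2) * (f' ω + g' ω) ^ 2 ∂μ :=
      integral_add (m1.integrable_sq.const_mul _) (m2.integrable_sq.const_mul _)
    rw [e1, integral_const_mul, integral_const_mul, hb2int]
  -- step 3: bound the first integral
  have hI1 : ∫ ω, ((f ω - f' ω) + (g ω - g' ω)) ^ 2 ∂μ ≤ 2 * U + 2 * V := by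
    calc ∫ ω, ((f ω - f' ω) + (g ω - g' ω)) ^ 2 ∂μ
        ≤ ∫ ω, (2 * (f ω - f' ω) ^ 2 + 2 * (g ω - g' ω) ^ 2) ∂μ := by
          refine integral_mono m1.integrable_sq
            (((hf.sub hf').integrable_sq.const_mul 2).add
              ((hg.sub hg').integrable_sq.const_mul 2)) ?_
          intro ω
          dsimp only
          nlinarith [sq_nonneg ((f ω - f' ω) - (g ω - g' ω))]
      _ = 2 * U + 2 * V := by
          have e1 : ∫ ω, (2 * (f ω - f' ω) ^ 2 + 2 * (g ω - g' ω) ^ 2) ∂μ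
              = (∫ ω, 2 * (f ω - f' ω) ^ 2 ∂μ) + ∫ ω, 2 * (g ω - g' ω) ^ 2 ∂μ :=
            integral_add ((hf.sub hf').integrable_sq.const_mul 2)
              ((hg.sub hg').integrable_sq.const_mul 2)
          rw [e1, integral_const_mul, integral_const_mul, ← hUdef, ← hVdef]
  -- step 4: |A - B| ≤ √U + √V
  have habs : |A - B| ≤ Real.sqrt U + Real.sqrt V := by
    have hdiff : A - B = (∫ ω, (f ω - f' ω) * g ω ∂μ) + ∫ ω, f' ω * (g ω - g' ω) ∂μ := by
      have h1 : Integrable (fun ω => (f ω - f' ω) * g ω) μ := intMul7 (hf.sub hf') hg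
      have h2 : Integrable (fun ω => f' ω * (g ω - g' ω)) μ := intMul7 hf' (hg.sub hg')
      rw [← hfg, ← hfg', ← integral_sub (intMul7 hf hg) (intMul7 hf' hg'),
        ← integral_add h1 h2]
      congr 1; funext ω; ring
    have c1 : |∫ ω, (f ω - f' ω) * g ω ∂μ| ≤ Real.sqrt U := by
      have h := cs7 (hf.sub hf') hg
      simp only [Pi.sub_apply] at h
      rw [hg1, Real.sqrt_one, mul_one, ← hUdef] at h
      exact h
    have c2 : |∫ ω, f' ω * (g ω - g' ω) ∂μ| ≤ Real.sqrt V := by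
      have h := cs7 hf' (hg.sub hg')
      simp only [Pi.sub_apply] at h
      rw [hf'1, Real.sqrt_one, one_mul, ← hVdef] at h
      exact h
    calc |A - B| = |(∫ ω, (f ω - f' ω) * g ω ∂μ) + ∫ ω, f' ω * (g ω - g' ω) ∂μ| := by
          rw [hdiff]
      _ ≤ |∫ ω, (f ω - f' ω) * g ω ∂μ| + |∫ ω, f' ω * (g ω - g' ω) ∂μ| := abs_add_le _ _
      _ ≤ Real.sqrt U + Real.sqrt V := add_le_add c1 c2
  have hBA : (A - B) ^ 2 ≤ 2 * (U + V) := by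
    have hm := mul_le_mul habs habs (abs_nonneg _)
      (by positivity : (0:ℝ) ≤ Real.sqrt U + Real.sqrt V)
    nlinarith [abs_mul_abs_self (A - B), Real.mul_self_sqrt hU0, Real.mul_self_sqrt hV0,
      sq_nonneg (Real.sqrt U - Real.sqrt V)]
  -- step 5: (b - a)^2 ≤ (U + V)/δ
  have habprod : 2 * δ ≤ a * b := by
    have h4 : (2 * δ) * (2 * δ) ≤ a ^ 2 * b ^ 2 :=
      mul_le_mul haδ hbδ (by positivity) (by positivity)
    nlinarith [mul_pos hapos hbpos]
  have hab : 8 * δ ≤ (a + b) ^ 2 := by nlinarith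
  have hsq : (b - a) ^ 2 * (a + b) ^ 2 = 4 * (A - B) ^ 2 := by
    have he : (b - a) * (a + b) = b ^ 2 - a ^ 2 := by ring
    calc (b - a) ^ 2 * (a + b) ^ 2 = ((b - a) * (a + b)) ^ 2 := by ring
      _ = (b ^ 2 - a ^ 2) ^ 2 := by rw [he]
      _ = 4 * (A - B) ^ 2 := by rw [ha2, hb2]; ring
  have hba : δ * (b - a) ^ 2 ≤ U + V := by
    have h1 : (b - a) ^ 2 * (8 * δ) ≤ (b - a) ^ 2 * (a + b) ^ 2 :=
      mul_le_mul_of_nonneg_left hab (sq_nonneg _)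
    rw [hsq] at h1
    linarith
  have hba' : (b - a) ^ 2 ≤ (U + V) / δ := by
    rw [le_div_iff₀ hδ]; linarith
  -- step 6: assemble
  have hterm2 : (2 * (1 / a - 1 / b) ^ 2) * (2 + 2 * B) = (2 / a ^ 2) * (b - a) ^ 2 := by
    rw [← hb2]; field_simp
  have hinva : 2 / a ^ 2 ≤ 1 / δ := by
    rw [div_le_div_iff₀ (by positivity) hδ]; linarith
  have hinva0 : 0 ≤ 2 / a ^ 2 := by positivity
  calc ∫ ω, ((f ω + g ω) / a - (f' ω + g' ω) / b) ^ 2 ∂μ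
      ≤ (2 / a ^ 2) * (∫ ω, ((f ω - f' ω) + (g ω - g' ω)) ^ 2 ∂μ)
        + (2 / a ^ 2) * (b - a) ^ 2 := by
        rw [← hterm2]; exact key1.trans_eq hsplit
    _ ≤ (2 / a ^ 2) * (2 * U + 2 * V) + (2 / a ^ 2) * ((U + V) / δ) :=
        add_le_add (mul_le_mul_of_nonneg_left hI1 hinva0)
          (mul_le_mul_of_nonneg_left hba' hinva0)
    _ ≤ (1 / δ) * (2 * U + 2 * V) + (1 / δ) * ((U + V) / δ) :=
        add_le_add (mul_le_mul_of_nonneg_right hinva (by linarith))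
          (mul_le_mul_of_nonneg_right hinva (div_nonneg (by linarith) hδ.le))
    _ = (2 / δ + 1 / δ ^ 2) * (U + V) := by field_simp

/-- Increment bound for the normalized sum field
`Y(s,t) = (X₀(s) + X₀(t)) / √(2 + 2 r(t-s))` of a centered stationary field `X₀` with
covariance `r`, `r 0 = 1`, on the domain where `r(t-s) ≥ -1 + δ`:
`E (Y(s,t) - Y(s',t'))² ≤ C (E (X₀(s)-X₀(s'))² + E (X₀(t)-X₀(t'))²)`. -/
theorem stmt7 {Ω : Type*} [MeasurableSpace Ω] (μ : Measure Ω) [IsProbabilityMeasure μ]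
    {d : ℕ} (X₀ : (Fin d → ℝ) → Ω → ℝ) (r : (Fin d → ℝ) → ℝ)
    (hL2 : ∀ t, MemLp (X₀ t) 2 μ)
    (hcent : ∀ t, ∫ ω, X₀ t ω ∂μ = 0)
    (hcov : ∀ s t, ∫ ω, X₀ s ω * X₀ t ω ∂μ = r (t - s))
    (hr0 : r 0 = 1)
    (δ : ℝ) (hδ : 0 < δ) :
    ∃ C > (0:ℝ), ∀ s t s' t' : Fin d → ℝ,
      -1 + δ ≤ r (t - s) → -1 + δ ≤ r (t' - s') →
      ∫ ω, ((X₀ s ω + X₀ t ω) / Real.sqrt (2 + 2 * r (t - s))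
            - (X₀ s' ω + X₀ t' ω) / Real.sqrt (2 + 2 * r (t' - s'))) ^ 2 ∂μ ≤
        C * ((∫ ω, (X₀ s ω - X₀ s' ω) ^ 2 ∂μ) + ∫ ω, (X₀ t ω - X₀ t' ω) ^ 2 ∂μ) := by
  refine ⟨2 / δ + 1 / δ ^ 2, by positivity, ?_⟩
  intro s t s' t' hA hB
  have var : ∀ u : Fin d → ℝ, ∫ ω, X₀ u ω ^ 2 ∂μ = 1 := by
    intro u
    calc ∫ ω, X₀ u ω ^ 2 ∂μ = ∫ ω, X₀ u ω * X₀ u ω ∂μ := by simp only [pow_two]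
      _ = r (u - u) := hcov u u
      _ = 1 := by rw [sub_self, hr0]
  exact key7 (hL2 s) (hL2 t) (hL2 s') (hL2 t') hδ (var t) (var s') (var t')
    (hcov s t) (hcov s' t') hA hB
end

section
/- Let h : ℝ^d → [0,∞) be continuous with h(0) = 0 and h(t) > 0 for t ≠ 0, and suppose u²(1 - r(q(u) ∘ t)) → h(t) uniformly on compact sets as u → ∞, where q(u) ∘ t denotes componentwise scaling and r is continuous with r ≤ 1, r(0) = 1. Then for any continuous function c : ℝ^d \ {0} → (0,∞) with c(t) → 1 as t → 0, one has (1 - r(c(t)·t))/(1 - r(t)) → 1 as t → 0 along any path on which 1 - r(t) > 0. -/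
open Filter Topology

/-- Along a path eventually in `K`, uniform convergence on `K` gives convergence of the
difference to zero. -/
lemma aux_unif_path {α : Type*} {F : ℝ → α → ℝ} {f : α → ℝ} {K : Set α}
    (hF : TendstoUniformlyOn F f atTop K) {x : ℝ → α}
    (hx : ∀ᶠ u in atTop, x u ∈ K) :
    Tendsto (fun u => F u (x u) - f (x u)) atTop (nhds 0) := by
  rw [Metric.tendstoUniformlyOn_iff] at hF
  rw [Metric.tendsto_nhds]
  intro ε hε
  filter_upwards [hF ε hε, hx] with u hu hxu
  have := hu (x u) hxu
  simpa [Real.dist_eq, abs_sub_comm] using this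

/-- Insensitivity of `1 - r` to multiplicative perturbations tending to `1`: under the
locally uniform convergence `u²(1 - r(q(u) ∘ t)) → h(t)` (Condition 4 of the paper), for
any continuous `c` with `c(t) → 1` as `t → 0`, one has `(1 - r(c(t)·t))/(1 - r(t)) → 1`
along paths `t = q(u) ∘ s(u)` with `s(u)` in a fixed compact set bounded away from `0` and
`1 - r(t) > 0`. -/
theorem stmt15 {d : ℕ} (r h : (Fin d → ℝ) → ℝ) (q : ℝ → Fin d → ℝ)
    (c : (Fin d → ℝ) → ℝ)
    (hr_cont : Continuous r) (hr_le : ∀ t, r t ≤ 1) (hr0 : r 0 = 1)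
    (hh_cont : Continuous h) (hh0 : h 0 = 0) (hh_pos : ∀ t, t ≠ 0 → 0 < h t)
    (hq_pos : ∀ u > (0:ℝ), ∀ i, 0 < q u i)
    (hq0 : Tendsto q atTop (nhds 0))
    (hconv : ∀ K : Set (Fin d → ℝ), IsCompact K →
      TendstoUniformlyOn (fun u t => u ^ 2 * (1 - r (fun i => q u i * t i))) h atTop K)
    (hc_cont : ContinuousOn c {(0 : Fin d → ℝ)}ᶜ) (hc_pos : ∀ t, t ≠ 0 → 0 < c t)
    (hc1 : Tendsto c (nhdsWithin 0 {(0 : Fin d → ℝ)}ᶜ) (nhds 1)) :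
    ∀ K : Set (Fin d → ℝ), IsCompact K → (0 : Fin d → ℝ) ∉ K →
      ∀ s : ℝ → Fin d → ℝ, (∀ᶠ u in atTop, s u ∈ K) →
      (∀ᶠ u in atTop, 0 < 1 - r (fun i => q u i * s u i)) →
      Tendsto (fun u =>
          (1 - r (c (fun i => q u i * s u i) • fun i => q u i * s u i)) /
            (1 - r (fun i => q u i * s u i))) atTop (nhds 1) := by
  intro K hK hK0 s hs hposr
  -- K is nonempty (otherwise the eventual membership is absurd)
  rcases K.eq_empty_or_nonempty with rfl | hKne
  · exact absurd hs.exists (by simp)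
  -- minimum of h on K, positive
  obtain ⟨z, hzK, hzmin'⟩ := hK.exists_isMinOn hKne hh_cont.continuousOn
  have hzmin : ∀ y ∈ K, h z ≤ h y := fun y hy => hzmin' hy
  have hz0 : z ≠ 0 := fun hz => hK0 (hz ▸ hzK)
  set ε := h z with hεdef
  have hεpos : 0 < ε := hh_pos z hz0
  -- bound on K
  obtain ⟨M, hM⟩ := hK.isBounded.subset_closedBall 0
  set M' := max M 0 with hM'def
  have hsM : ∀ᶠ u in atTop, ‖s u‖ ≤ M' := by
    filter_upwards [hs] with u hu
    have := hM hu
    simp only [Metric.mem_closedBall, dist_zero_right] at this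
    exact this.trans (le_max_left _ _)
  -- the path t u
  set t : ℝ → Fin d → ℝ := fun u i => q u i * s u i with htdef
  have ht0 : Tendsto t atTop (nhds 0) := by
    rw [tendsto_pi_nhds]
    intro i
    have hqi : Tendsto (fun u => q u i) atTop (nhds 0) := by
      have := ((continuous_apply i).tendsto (0 : Fin d → ℝ)).comp hq0
      simpa [Function.comp_def] using this
    apply squeeze_zero_norm' ?_ (by simpa using hqi.norm.mul_const M')
    filter_upwards [hsM] with u hu
    have h1 : ‖s u i‖ ≤ ‖s u‖ := norm_le_pi_norm (s u) i
    calc ‖q u i * s u i‖ = ‖q u i‖ * ‖s u i‖ := norm_mul _ _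
      _ ≤ ‖q u i‖ * M' := by
          exact mul_le_mul_of_nonneg_left (h1.trans hu) (norm_nonneg _)
  have htne : ∀ᶠ u in atTop, t u ≠ 0 := by
    filter_upwards [hs, eventually_gt_atTop (0:ℝ)] with u huK hu0 h0
    have hsne : s u ≠ 0 := fun hsz => hK0 (hsz ▸ huK)
    obtain ⟨i, hi⟩ := Function.ne_iff.1 hsne
    have : q u i * s u i = 0 := congrFun h0 i
    rcases mul_eq_zero.1 this with hq | hs'
    · exact (hq_pos u hu0 i).ne' hq
    · exact hi hs'
  -- c (t u) → 1
  have hct : Tendsto (fun u => c (t u)) atTop (nhds 1) := by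
    refine hc1.comp ?_
    rw [tendsto_nhdsWithin_iff]
    exact ⟨ht0, htne⟩
  -- the perturbed path x u = c (t u) • s u stays in a compact set
  set x : ℝ → Fin d → ℝ := fun u => c (t u) • s u with hxdef
  set K2 : Set (Fin d → ℝ) :=
    (fun p : ℝ × (Fin d → ℝ) => p.1 • p.2) '' (Set.Icc (1/2 : ℝ) 2 ×ˢ K) with hK2def
  have hK2 : IsCompact K2 :=
    (isCompact_Icc.prod hK).image (continuous_fst.smul continuous_snd)
  have hcIcc : ∀ᶠ u in atTop, c (t u) ∈ Set.Icc (1/2 : ℝ) 2 :=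
    hct (Icc_mem_nhds (by norm_num) (by norm_num))
  have hxmem : ∀ᶠ u in atTop, x u ∈ K2 := by
    filter_upwards [hcIcc, hs] with u h1 h2
    exact ⟨(c (t u), s u), ⟨h1, h2⟩, rfl⟩
  set K'' : Set (Fin d → ℝ) := K ∪ K2 with hK''def
  have hK'' : IsCompact K'' := hK.union hK2
  have hUC := hK''.uniformContinuousOn_of_continuous hh_cont.continuousOn
  -- key identity : c (t u) • t u = q u ∘ x u
  have hxeq : ∀ u, (c (t u) • t u) = fun i => q u i * x u i := by
    intro u
    funext i
    simp only [Pi.smul_apply, smul_eq_mul, hxdef, htdef]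
    ring
  -- convergence of numerator and denominator rescaled by u²
  have hN : Tendsto (fun u => u ^ 2 * (1 - r (fun i => q u i * x u i)) - h (x u))
      atTop (nhds 0) := aux_unif_path (hconv K'' hK'') (hxmem.mono fun u hu => Or.inr hu)
  have hD : Tendsto (fun u => u ^ 2 * (1 - r (fun i => q u i * s u i)) - h (s u))
      atTop (nhds 0) := aux_unif_path (hconv K'' hK'') (hs.mono fun u hu => Or.inl hu)
  -- h (x u) - h (s u) → 0
  have hdistxs : Tendsto (fun u => dist (x u) (s u)) atTop (nhds 0) := by
    apply squeeze_zero' (Eventually.of_forall fun u => dist_nonneg)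
      (g := fun u => |c (t u) - 1| * M')
    · filter_upwards [hsM] with u hu
      have hsub : x u - s u = (c (t u) - 1) • s u := by
        simp [hxdef, sub_smul, one_smul]
      rw [dist_eq_norm, hsub, norm_smul, Real.norm_eq_abs]
      exact mul_le_mul_of_nonneg_left hu (abs_nonneg _)
    · have := (hct.sub_const 1).abs.mul_const M'
      simpa using this
  have hxh : Tendsto (fun u => h (x u) - h (s u)) atTop (nhds 0) := by
    rw [Metric.tendsto_nhds]
    intro δ hδ
    rw [Metric.uniformContinuousOn_iff] at hUC
    obtain ⟨η, hη, hUC'⟩ := hUC δ hδ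
    have hd := (Metric.tendsto_nhds.1 hdistxs) η hη
    filter_upwards [hd, hxmem, hs] with u hdu hxu hsu
    have hxu' : x u ∈ K'' := Or.inr hxu
    have hsu' : s u ∈ K'' := Or.inl hsu
    have : dist (x u) (s u) < η := by
      simpa [Real.dist_eq, abs_of_nonneg dist_nonneg] using hdu
    have := hUC' (x u) hxu' (s u) hsu' this
    simpa [Real.dist_eq] using this
  -- abbreviations
  set N : ℝ → ℝ := fun u => u ^ 2 * (1 - r (c (t u) • t u)) with hNdef
  set D : ℝ → ℝ := fun u => u ^ 2 * (1 - r (t u)) with hDdef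
  have hN' : Tendsto (fun u => N u - h (x u)) atTop (nhds 0) := by
    refine hN.congr fun u => ?_
    rw [hNdef]
    simp only [hxeq u]
  have hND : Tendsto (fun u => N u - D u) atTop (nhds 0) := by
    have := (hN'.add hxh).sub hD
    rw [show (0:ℝ) + 0 - 0 = 0 by ring] at this
    refine this.congr fun u => ?_
    ring
  -- lower bound on D
  have hDlb : ∀ᶠ u in atTop, ε / 2 ≤ D u := by
    have hDclose := (Metric.tendsto_nhds.1 hD) (ε / 2) (by linarith)
    filter_upwards [hDclose, hs] with u hu hsu
    have h1 : ε ≤ h (s u) := hzmin (s u) hsu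
    have h2 : |D u - h (s u)| < ε / 2 := by
      simpa [Real.dist_eq] using hu
    have := abs_lt.1 h2
    linarith [this.1]
  -- conclude : N/D → 1, then transfer
  have hratio : Tendsto (fun u => N u / D u) atTop (nhds 1) := by
    rw [Metric.tendsto_nhds]
    intro δ hδ
    have hNDclose := (Metric.tendsto_nhds.1 hND) (δ * (ε / 2)) (by positivity)
    filter_upwards [hNDclose, hDlb] with u hu hDu
    have hDpos : 0 < D u := lt_of_lt_of_le (by linarith) hDu
    have h1 : |N u - D u| < δ * (ε / 2) := by
      simpa [Real.dist_eq] using hu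
    have h2 : N u / D u - 1 = (N u - D u) / D u := by
      field_simp
    rw [Real.dist_eq, h2, abs_div, abs_of_pos hDpos, div_lt_iff₀ hDpos]
    calc |N u - D u| < δ * (ε / 2) := h1
      _ ≤ δ * D u := by
          exact mul_le_mul_of_nonneg_left hDu (le_of_lt hδ)
  refine hratio.congr' ?_
  filter_upwards [eventually_gt_atTop (0:ℝ)] with u hu
  have hu2 : (u:ℝ) ^ 2 ≠ 0 := by positivity
  rw [hNdef, hDdef]
  simp only
  rw [mul_div_mul_left _ _ hu2]
end
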